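/- Let d ≥ 1, let (q_{ij})_{i,j=1}^d be a real matrix whose rows sum to zero (Σ_j q_{ij} = 0 for every i), and let λ, μ ∈ ℝᵈ. For z > 0 define the d×d matrix A(z) with entries A(z)_{ij} = (λᵢ(z−1) + μᵢ(1/z − 1))·1_{{i=j}} + q_{ji}, and let α(z) = det A(z). Let T be the d×d matrix with first row identically equal to 1 and T_{ij} = q_{ji} for i ≥ 2, set τ = det T, assume τ ≠ 0, and let π ∈ ℝᵈ be the (unique) vector with T·π = e₁, the first standard unit vector. Then the function z ↦ α(z) has a derivative at z = 1 equal to τ·(Σ_j π_j λ_j − Σ_j π_j μ_j); in particular α(1) = 0. -/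

import Mathlib

open Matrix Finset

private lemma detHasDerivAt {d : ℕ} {M : ℝ → Matrix (Fin d) (Fin d) ℝ}
    {M' : Matrix (Fin d) (Fin d) ℝ} {x : ℝ}
    (h : ∀ i j, HasDerivAt (fun z => M z i j) (M' i j) x) :
    HasDerivAt (fun z => (M z).det)
      (∑ i, ((M x).updateCol i fun k => M' k i).det) x := by
  have hprod : ∀ σ : Equiv.Perm (Fin d),
      HasDerivAt (fun z => ∏ i, M z (σ i) i)
        (∑ i, (∏ j ∈ Finset.univ.erase i, M x (σ j) j) * M' (σ i) i) x := by
    intro σ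
    have := HasDerivAt.fun_finsetProd (u := (Finset.univ : Finset (Fin d)))
      (f := fun i z => M z (σ i) i) (f' := fun i => M' (σ i) i) (x := x)
      (fun i _ => h (σ i) i)
    simpa [smul_eq_mul] using this
  have key : HasDerivAt (fun z => ∑ σ : Equiv.Perm (Fin d),
        ((Equiv.Perm.sign σ : ℤ) : ℝ) * ∏ i, M z (σ i) i)
      (∑ σ : Equiv.Perm (Fin d), ((Equiv.Perm.sign σ : ℤ) : ℝ) *
        ∑ i, (∏ j ∈ Finset.univ.erase i, M x (σ j) j) * M' (σ i) i) x :=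
    HasDerivAt.fun_sum fun σ _ => (hprod σ).const_mul _
  have h1 : (fun z => ∑ σ : Equiv.Perm (Fin d),
      ((Equiv.Perm.sign σ : ℤ) : ℝ) * ∏ i, M z (σ i) i) = fun z => (M z).det := by
    funext z; rw [Matrix.det_apply']
  have h2 : (∑ σ : Equiv.Perm (Fin d), ((Equiv.Perm.sign σ : ℤ) : ℝ) *
        ∑ i, (∏ j ∈ Finset.univ.erase i, M x (σ j) j) * M' (σ i) i)
      = ∑ i, ((M x).updateCol i fun k => M' k i).det := by
    simp_rw [Finset.mul_sum]
    rw [Finset.sum_comm]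
    refine Finset.sum_congr rfl fun i _ => ?_
    rw [Matrix.det_apply']
    refine Finset.sum_congr rfl fun σ _ => ?_
    have : ∏ j, ((M x).updateCol i fun k => M' k i) (σ j) j
        = M' (σ i) i * ∏ j ∈ Finset.univ.erase i, M x (σ j) j := by
      rw [← Finset.mul_prod_erase Finset.univ _ (Finset.mem_univ i)]
      simp only [Matrix.updateCol_apply, if_pos rfl]
      congr 1
      refine Finset.prod_congr rfl fun j hj => ?_
      rw [if_neg (Finset.ne_of_mem_erase hj)]
    rw [this]; ring
  rw [h1, h2] at key
  exact key

/-- Determinant expansion of the Markov-modulated M/M/1 queue: with transition-rate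
matrix `q` (rows summing to zero), `A(z)ᵢⱼ = (λᵢ(z-1) + μᵢ(1/z-1))1_{i=j} + qⱼᵢ`,
`α(z) = det A(z)`, `T` the matrix with first row all ones and `Tᵢⱼ = qⱼᵢ` for
`i ≥ 2`, `τ = det T ≠ 0`, and `π` the solution of `Tπ = e₁` (i.e. the stationary
distribution of the background chain), one has `α(1) = 0` and
`α′(1) = τ·(Σⱼ πⱼλⱼ - Σⱼ πⱼμⱼ)`. -/
theorem stmt19 (d : ℕ) (hd : 1 ≤ d)
    (q : Matrix (Fin d) (Fin d) ℝ) (hq : ∀ i, ∑ j, q i j = 0)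
    (lam mu : Fin d → ℝ)
    (A : ℝ → Matrix (Fin d) (Fin d) ℝ)
    (hA : A = fun z => Matrix.of fun i j =>
      (if i = j then lam i * (z - 1) + mu i * (1 / z - 1) else 0) + q j i)
    (α : ℝ → ℝ) (hα : α = fun z => (A z).det)
    (T : Matrix (Fin d) (Fin d) ℝ)
    (hT : T = Matrix.of fun i j => if i = (⟨0, by omega⟩ : Fin d) then 1 else q j i)
    (τ : ℝ) (hτ : τ = T.det) (hτ0 : τ ≠ 0)
    (π : Fin d → ℝ) (hπ : T.mulVec π = Pi.single (⟨0, by omega⟩ : Fin d) 1) :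
    α 1 = 0 ∧ HasDerivAt α (τ * (∑ j, π j * lam j - ∑ j, π j * mu j)) 1 := by
  have hd0 : (0 : ℕ) < d := hd
  set i0 : Fin d := ⟨0, hd0⟩ with hi0
  set e : Fin d → ℝ → ℝ := fun j z => lam j * (z - 1) + mu j * (1 / z - 1) with he
  set B : ℝ → Matrix (Fin d) (Fin d) ℝ := fun z => (A z).updateRow i0 (fun j => e j z)
    with hB
  -- column sums of A z
  have rowsum : ∀ z, (fun j => e j z) = ∑ k, (1 : ℝ) • A z k := by
    intro z
    funext j
    simp only [Finset.sum_apply, Pi.smul_apply, smul_eq_mul, one_mul, hA, Matrix.of_apply]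
    rw [Finset.sum_add_distrib, Finset.sum_ite_eq' Finset.univ j, if_pos (Finset.mem_univ j),
      hq j, add_zero]
  have hBA : ∀ z, (B z).det = (A z).det := by
    intro z
    rw [hB]
    simp only
    rw [rowsum z, Matrix.det_updateRow_sum]
    simp
  have he1 : ∀ j, e j 1 = 0 := by intro j; simp [he]
  -- α 1 = 0
  have hα1 : α 1 = 0 := by
    rw [hα]
    simp only
    rw [← hBA 1]
    refine Matrix.det_eq_zero_of_row_eq_zero i0 fun j => ?_
    simp [hB, Matrix.updateRow_self, he1]
  refine ⟨hα1, ?_⟩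
  -- entrywise derivatives of (B z)ᵀ
  have he' : ∀ j, HasDerivAt (e j) (lam j - mu j) 1 := by
    intro j
    have h1 : HasDerivAt (fun z : ℝ => lam j * (z - 1)) (lam j) 1 := by
      simpa using ((hasDerivAt_id (1:ℝ)).sub_const 1).const_mul (lam j)
    have h2 : HasDerivAt (fun z : ℝ => mu j * (1 / z - 1)) (-mu j) 1 := by
      have : HasDerivAt (fun z : ℝ => 1 / z - 1) (-1) 1 := by
        simpa [one_div] using (hasDerivAt_inv (one_ne_zero)).sub_const (1:ℝ)
      simpa using this.const_mul (mu j)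
    simpa [he, sub_eq_add_neg, one_div] using h1.fun_add h2
  set M' : Matrix (Fin d) (Fin d) ℝ :=
    Matrix.of fun i j => if j = i0 then lam i - mu i else
      if j = i then lam i - mu i else 0 with hM'
  have hM : ∀ i j, HasDerivAt (fun z => (B z)ᵀ i j) (M' i j) 1 := by
    intro i j
    have hfun : (fun z => (B z)ᵀ i j) = fun z =>
        if j = i0 then e i z else ((if j = i then e j z else 0) + q i j) := by
      funext z
      simp only [Matrix.transpose_apply, hB, Matrix.updateRow_apply, hA, Matrix.of_apply]
      rfl
    rw [hfun, hM']
    simp only [Matrix.of_apply]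
    by_cases hj0 : j = i0
    · simp only [if_pos hj0]
      exact he' i
    · simp only [if_neg hj0]
      by_cases hji : j = i
      · subst hji
        simp only [if_pos rfl]
        exact (he' j).add_const _
      · simp only [if_neg hji]
        exact hasDerivAt_const _ _
  have hder := detHasDerivAt hM
  -- identify the function
  have hfun2 : (fun z => ((B z)ᵀ).det) = α := by
    funext z
    rw [Matrix.det_transpose, hBA z, hα]
  rw [hfun2] at hder
  -- identify the derivative value
  have hval : (∑ i, (((B 1)ᵀ).updateCol i fun k => M' k i).det)
      = τ * (∑ j, π j * lam j - ∑ j, π j * mu j) := by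
    have hterm : ∀ i, (((B 1)ᵀ).updateCol i fun k => M' k i).det
        = ((B 1).updateRow i fun k => M' k i).det := by
      intro i
      rw [Matrix.updateCol_transpose, Matrix.det_transpose]
    have hzero : ∀ i, i ≠ i0 → ((B 1).updateRow i fun k => M' k i).det = 0 := by
      intro i hi
      refine Matrix.det_eq_zero_of_row_eq_zero i0 fun j => ?_
      rw [Matrix.updateRow_ne (Ne.symm hi)]
      simp [hB, Matrix.updateRow_self, he1]
    have hsum : (∑ i, (((B 1)ᵀ).updateCol i fun k => M' k i).det)
        = ((B 1).updateRow i0 fun k => M' k i0).det := by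
      simp_rw [hterm]
      rw [Finset.sum_eq_single i0 (fun i _ hi => hzero i hi) (fun h => absurd (Finset.mem_univ i0) h)]
    rw [hsum]
    -- the updated matrix equals T with row i0 replaced by lam - mu
    have hrow : ((B 1).updateRow i0 fun k => M' k i0) = T.updateRow i0 (fun k => lam k - mu k) := by
      ext i j
      by_cases hi : i = i0
      · subst hi
        simp [hM', Matrix.updateRow_self]
      · rw [Matrix.updateRow_ne hi, Matrix.updateRow_ne hi]
        rw [hB]
        simp only
        rw [Matrix.updateRow_ne hi, hA, hT]
        simp only [Matrix.of_apply, if_neg hi]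
        by_cases hij : i = j <;> simp [hij, he1]
    rw [hrow]
    -- adjugate computation
    have hadj : ∀ j, (Matrix.adjugate T) j i0 = τ * π j := by
      have h1 : Matrix.adjugate T *ᵥ (T *ᵥ π) = Matrix.adjugate T *ᵥ Pi.single i0 1 := by
        rw [hπ]
      rw [Matrix.mulVec_mulVec, Matrix.adjugate_mul, Matrix.smul_mulVec,
        Matrix.one_mulVec] at h1
      intro j
      have := congrFun h1 j
      rw [Matrix.mulVec_single] at this
      simpa [hτ, mul_comm] using this.symm
    have hc : (T.updateRow i0 (fun k => lam k - mu k)).det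
        = ∑ j, Matrix.adjugate T j i0 * (lam j - mu j) := by
      rw [← Matrix.cramer_transpose_apply, Matrix.cramer_eq_adjugate_mulVec,
        ← Matrix.adjugate_transpose]
      simp [Matrix.mulVec, dotProduct, Matrix.transpose_apply]
    rw [hc]
    simp_rw [hadj]
    rw [← Finset.sum_sub_distrib] at *
    rw [Finset.mul_sum]
    congr 1
    funext j
    ring
  rw [hval] at hder
  exact hder
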